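/- Let p be a prime. For every pair (h₁, h₂) of invertible 2×2 matrices over ℚ_p with det h₁ = det h₂, there exist an invertible diagonal matrix t over ℚ_p, elements u, v ∈ ℚ_p, ε ∈ ℚ_p^×, and matrices k₁, k₂ ∈ GL₂(ℚ_p) all of whose entries lie in ℤ_p and whose determinants are units of ℤ_p, such that h₁ = t · [[1, u],[0, 1]] · k₁ and h₂ = t · [[ε, 0],[0, ε⁻¹]] · [[1, v],[0, 1]] · k₂. (This exhibits the pairs ([[1,u],[0,1]], [[ε,0],[0,ε⁻¹]]·[[1,v],[0,1]]) as representatives of the double cosets D(ℚ_p)\H₁(ℚ_p)/(GL₂(ℤ_p) × GL₂(ℤ_p)).) -/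
import Mathlib


open Matrix

lemma iwasawa_explicit {p : ℕ} [Fact p.Prime] (α β γ δ : ℚ_[p])
    (hg : α * δ - β * γ ≠ 0) :
    ∃ (a d u : ℚ_[p]) (k : Matrix (Fin 2) (Fin 2) ℚ_[p]),
      a ≠ 0 ∧ d ≠ 0 ∧ (∀ i j, ‖k i j‖ ≤ 1) ∧ ‖k.det‖ = 1 ∧
      !![α,β;γ,δ] = !![a,0;0,d] * !![1,u;0,1] * k := by
  rcases le_or_gt ‖γ‖ ‖δ‖ with h | h
  · have hδ0 : δ ≠ 0 := by
      intro h0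
      have hγ0 : γ = 0 := by
        rw [h0] at h; simpa using h
      rw [h0, hγ0] at hg; simp at hg
    refine ⟨(α * δ - β * γ) / δ, δ, β * δ / (α * δ - β * γ), !![1, 0; γ/δ, 1],
      div_ne_zero hg hδ0, hδ0, ?_, ?_, ?_⟩
    · intro i j
      fin_cases i <;> fin_cases j <;> simp
      exact div_le_one_of_le₀ h (norm_nonneg _)
    · simp [Matrix.det_fin_two_of]
    · ext i j
      fin_cases i <;> fin_cases j <;>
        simp [Matrix.mul_apply, Fin.sum_univ_two] <;> field_simp <;> ring
  · have hγ0 : γ ≠ 0 := by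
      intro h0
      exact (norm_nonneg δ).not_gt (by simpa [h0] using h)
    have hne : β * γ - α * δ ≠ 0 := fun h0 => hg (by linear_combination -h0)
    refine ⟨(β * γ - α * δ) / γ, γ, α * γ / (β * γ - α * δ), !![0, 1; 1, δ/γ],
      div_ne_zero hne hγ0, hγ0, ?_, ?_, ?_⟩
    · intro i j
      fin_cases i <;> fin_cases j <;> simp
      exact div_le_one_of_le₀ h.le (norm_nonneg _)
    · simp [Matrix.det_fin_two_of]
    · ext i j
      fin_cases i <;> fin_cases j <;>
        simp [Matrix.mul_apply, Fin.sum_univ_two] <;> field_simp [hne] <;> ring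

lemma iwasawa {p : ℕ} [Fact p.Prime] (g : Matrix (Fin 2) (Fin 2) ℚ_[p])
    (hg : g.det ≠ 0) :
    ∃ (a d u : ℚ_[p]) (k : Matrix (Fin 2) (Fin 2) ℚ_[p]),
      a ≠ 0 ∧ d ≠ 0 ∧ (∀ i j, ‖k i j‖ ≤ 1) ∧ ‖k.det‖ = 1 ∧
      g = !![a,0;0,d] * !![1,u;0,1] * k := by
  have hdet : g.det = g 0 0 * g 1 1 - g 0 1 * g 1 0 := Matrix.det_fin_two g
  obtain ⟨a, d, u, k, ha, hd, hk, hkdet, heq⟩ :=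
    iwasawa_explicit (g 0 0) (g 0 1) (g 1 0) (g 1 1) (hdet ▸ hg)
  exact ⟨a, d, u, k, ha, hd, hk, hkdet, by rw [← heq]; exact Matrix.eta_fin_two g⟩

theorem stmt_14 (p : ℕ) [Fact p.Prime] (h₁ h₂ : Matrix (Fin 2) (Fin 2) ℚ_[p])
    (hu₁ : IsUnit h₁.det) (hu₂ : IsUnit h₂.det) (hdet : h₁.det = h₂.det) :
    ∃ (a d : ℚ_[p]) (u v : ℚ_[p]) (ε : ℚ_[p]) (k₁ k₂ : Matrix (Fin 2) (Fin 2) ℚ_[p]),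
      a ≠ 0 ∧ d ≠ 0 ∧ ε ≠ 0 ∧
      (∀ i j, ‖k₁ i j‖ ≤ 1) ∧ ‖k₁.det‖ = 1 ∧
      (∀ i j, ‖k₂ i j‖ ≤ 1) ∧ ‖k₂.det‖ = 1 ∧
      h₁ = !![a,0;0,d] * !![1,u;0,1] * k₁ ∧
      h₂ = !![a,0;0,d] * (!![ε,0;0,ε⁻¹] * !![1,v;0,1]) * k₂ := by
  have h1ne : h₁.det ≠ 0 := hu₁.ne_zero
  have h2ne : h₂.det ≠ 0 := hu₂.ne_zero
  obtain ⟨a, d, u, k₁, ha, hd, hk₁, hk₁det, hg₁⟩ := iwasawa h₁ h1ne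
  obtain ⟨a2, d2, v, k₂, ha2, hd2, hk₂, hk₂det, hg₂⟩ := iwasawa h₂ h2ne
  have hdet₁ : h₁.det = a * d * k₁.det := by
    rw [hg₁, Matrix.det_mul, Matrix.det_mul, Matrix.det_fin_two_of, Matrix.det_fin_two_of]
    ring
  have hdet₂ : h₂.det = a2 * d2 * k₂.det := by
    rw [hg₂, Matrix.det_mul, Matrix.det_mul, Matrix.det_fin_two_of, Matrix.det_fin_two_of]
    ring
  have hk₁ne : k₁.det ≠ 0 := by intro h0; rw [h0] at hk₁det; simp at hk₁det
  have hk₂ne : k₂.det ≠ 0 := by intro h0; rw [h0] at hk₂det; simp at hk₂det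
  set ε := a2 / a with hε
  set w := d2 * a2 / (a * d) with hw
  have key : a * d * k₁.det = a2 * d2 * k₂.det := by rw [← hdet₁, ← hdet₂, hdet]
  have hwval : w = k₁.det / k₂.det := by
    rw [hw, div_eq_div_iff (mul_ne_zero ha hd) hk₂ne]
    linear_combination -key
  have hwnorm : ‖w‖ = 1 := by
    rw [hwval, norm_div, hk₁det, hk₂det]; norm_num
  have hwne : w ≠ 0 := by intro h0; rw [h0] at hwnorm; simp at hwnorm
  refine ⟨a, d, u, v / w, ε, k₁, !![1,0;0,w] * k₂, ha, hd,
    div_ne_zero ha2 ha, hk₁, hk₁det, ?_, ?_, hg₁, ?_⟩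
  · intro i j
    have hij : (!![1,0;0,w] * k₂) i j =
        if i = 0 then k₂ 0 j else w * k₂ 1 j := by
      fin_cases i <;> simp [Matrix.mul_apply, Fin.sum_univ_two]
    rw [hij]
    split
    · exact hk₂ 0 j
    · rw [norm_mul, hwnorm, one_mul]; exact hk₂ 1 j
  · rw [Matrix.det_mul, norm_mul, hk₂det, Matrix.det_fin_two_of]
    simp [hwnorm]
  · have hmat : !![a2,0;0,d2] * !![1,v;0,1] =
        !![a,0;0,d] * (!![ε,0;0,ε⁻¹] * !![1,v/w;0,1]) * !![1,0;0,w] := by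
      ext i j
      fin_cases i <;> fin_cases j <;>
        simp [Matrix.mul_apply, Fin.sum_univ_two, hε, hw] <;> field_simp <;> ring
    rw [hg₂, hmat, mul_assoc, mul_assoc, mul_assoc]
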